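/- arXiv:1702.04077 — 3 statements merged into one kernel-verified Lean document; each statement's English description precedes it below -/
import Mathlib

section
/- Let M be an ℓ×ℓ real symmetric positive definite matrix partitioned into blocks M_vv (n×n), M_vh, M_hv = M_vhᵀ, M_hh, and let Q_vv be an n×n real symmetric positive definite matrix. Set A := (M_vv)⁻¹ M_vh, M_{h|v} := M_hh − M_hv (M_vv)⁻¹ M_vh, and let Q be the ℓ×ℓ block matrix with blocks Q_vv, Q_vv·A, Aᵀ·Q_vv, and M_{h|v} + Aᵀ Q_vv A. Then Q is symmetric positive definite. -/
set_option maxHeartbeats 1000000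


open Matrix

lemma aux_conj_posDef {ι : Type*} [Fintype ι] [DecidableEq ι]
    {N B : Matrix ι ι ℝ} (hN : N.PosDef) (hB : IsUnit B) :
    (Bᴴ * N * B).PosDef := by
  refine Matrix.PosDef.of_dotProduct_mulVec_pos ?_ ?_
  · unfold Matrix.IsHermitian
    rw [conjTranspose_mul, conjTranspose_mul, conjTranspose_conjTranspose, hN.1.eq,
      Matrix.mul_assoc]
  · intro x hx
    have hBx : B *ᵥ x ≠ 0 :=
      (Matrix.mulVec_injective_iff_isUnit.mpr hB).ne_iff' (by simp) |>.2 hx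
    have heq : star x ⬝ᵥ (Bᴴ * N * B) *ᵥ x = star (B *ᵥ x) ⬝ᵥ N *ᵥ (B *ᵥ x) := by
      rw [star_mulVec, ← dotProduct_mulVec, Matrix.mulVec_mulVec, Matrix.mulVec_mulVec]
    rw [heq]
    exact hN.dotProduct_mulVec_pos hBx

lemma aux_blockdiag_posDef {n m : ℕ}
    {P : Matrix (Fin n) (Fin n) ℝ} {S : Matrix (Fin m) (Fin m) ℝ}
    (hP : P.PosDef) (hS : S.PosDef) :
    (fromBlocks P 0 0 S).PosDef := by
  refine Matrix.PosDef.of_dotProduct_mulVec_pos ?_ ?_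
  · unfold Matrix.IsHermitian
    rw [fromBlocks_conjTranspose, hP.1.eq, hS.1.eq]
    simp
  · intro x hx
    have hx' : x = Sum.elim (x ∘ Sum.inl) (x ∘ Sum.inr) := (Sum.elim_comp_inl_inr x).symm
    rw [hx', fromBlocks_mulVec, Function.star_sumElim, sumElim_dotProduct_sumElim]
    simp only [Matrix.zero_mulVec, add_zero, zero_add]
    rcases (by
      by_contra h
      push_neg at h
      apply hx
      ext (i | i)
      · exact congrFun h.1 i
      · exact congrFun h.2 i : x ∘ Sum.inl ≠ 0 ∨ x ∘ Sum.inr ≠ 0) with h | h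
    · exact add_pos_of_pos_of_nonneg (hP.dotProduct_mulVec_pos h) (hS.posSemidef.dotProduct_mulVec_nonneg _)
    · exact add_pos_of_nonneg_of_pos (hP.posSemidef.dotProduct_mulVec_nonneg _) (hS.dotProduct_mulVec_pos h)

lemma aux_toBlocks₁₁_posDef {n m : ℕ}
    {M : Matrix (Fin n ⊕ Fin m) (Fin n ⊕ Fin m) ℝ} (hM : M.PosDef) :
    M.toBlocks₁₁.PosDef := by
  refine Matrix.PosDef.of_dotProduct_mulVec_pos ?_ ?_
  · ext i j
    exact congrFun (congrFun hM.1 (Sum.inl i)) (Sum.inl j)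
  · intro x hx
    have hx' : Sum.elim x (0 : Fin m → ℝ) ≠ 0 := by
      intro h
      apply hx
      ext i
      exact congrFun h (Sum.inl i)
    have := hM.dotProduct_mulVec_pos hx'
    rw [← fromBlocks_toBlocks M, fromBlocks_mulVec, Function.star_sumElim,
      sumElim_dotProduct_sumElim] at this
    rw [Sum.elim_comp_inl, Sum.elim_comp_inr] at this
    simpa using this

lemma aux_toBlocks₂₁ {n m : ℕ}
    {M : Matrix (Fin n ⊕ Fin m) (Fin n ⊕ Fin m) ℝ} (hM : M.IsHermitian) :
    M.toBlocks₂₁ = (M.toBlocks₁₂)ᴴ := by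
  ext i j
  exact (congrFun (congrFun hM (Sum.inr i)) (Sum.inl j)).symm

lemma aux_schur_posDef {n m : ℕ}
    {M : Matrix (Fin n ⊕ Fin m) (Fin n ⊕ Fin m) ℝ} (hM : M.PosDef) :
    (M.toBlocks₂₂ - M.toBlocks₂₁ * (M.toBlocks₁₁)⁻¹ * M.toBlocks₁₂).PosDef := by
  have h11 : M.toBlocks₁₁.PosDef := aux_toBlocks₁₁_posDef hM
  have := h11.isUnit.invertible
  refine Matrix.PosDef.of_dotProduct_mulVec_pos ?_ ?_
  · have hH : M.IsHermitian := hM.1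
    rw [aux_toBlocks₂₁ hH]
    apply Matrix.IsHermitian.sub
    · ext i j
      exact congrFun (congrFun hH (Sum.inr i)) (Sum.inr j)
    · exact Matrix.isHermitian_conjTranspose_mul_mul _ h11.1.inv
  · intro y hy
    have key := schur_complement_eq₁₁ (A := M.toBlocks₁₁) M.toBlocks₁₂ M.toBlocks₂₂
      (-(((M.toBlocks₁₁)⁻¹ * M.toBlocks₁₂) *ᵥ y)) y h11.1
    rw [← aux_toBlocks₂₁ hM.1, fromBlocks_toBlocks, neg_add_cancel] at key
    have hne : Sum.elim (-(((M.toBlocks₁₁)⁻¹ * M.toBlocks₁₂) *ᵥ y)) y ≠ 0 := by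
      intro h
      apply hy
      ext i
      exact congrFun h (Sum.inr i)
    have hpos := hM.dotProduct_mulVec_pos hne
    rw [← dotProduct_mulVec] at key
    rw [key] at hpos
    simp only [star_zero, zero_dotProduct, zero_vecMul, zero_add] at hpos
    rwa [← dotProduct_mulVec] at hpos

theorem stmt5 {n m : ℕ}
    (M : Matrix (Fin n ⊕ Fin m) (Fin n ⊕ Fin m) ℝ) (hM : M.PosDef)
    (Qvv : Matrix (Fin n) (Fin n) ℝ) (hQvv : Qvv.PosDef)
    (A : Matrix (Fin n) (Fin m) ℝ) (hA : A = (M.toBlocks₁₁)⁻¹ * M.toBlocks₁₂)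
    (Mhv : Matrix (Fin m) (Fin m) ℝ)
    (hMhv : Mhv = M.toBlocks₂₂ - M.toBlocks₂₁ * (M.toBlocks₁₁)⁻¹ * M.toBlocks₁₂) :
    (Matrix.fromBlocks Qvv (Qvv * A) (Aᵀ * Qvv) (Mhv + Aᵀ * Qvv * A)).PosDef := by
  have hMhv' : Mhv.PosDef := hMhv ▸ aux_schur_posDef hM
  have hD : (fromBlocks Qvv 0 0 Mhv).PosDef := aux_blockdiag_posDef hQvv hMhv'
  have hL : IsUnit (fromBlocks (1 : Matrix (Fin n) (Fin n) ℝ) A (0 : Matrix (Fin m) (Fin n) ℝ) (1 : Matrix (Fin m) (Fin m) ℝ)) := by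
    letI : Invertible (1 : Matrix (Fin n) (Fin n) ℝ) := invertibleOne
    letI : Invertible (1 : Matrix (Fin m) (Fin m) ℝ) := invertibleOne
    letI := Matrix.fromBlocksZero₂₁Invertible (1 : Matrix (Fin n) (Fin n) ℝ) A
      (1 : Matrix (Fin m) (Fin m) ℝ)
    exact isUnit_of_invertible _
  have key := aux_conj_posDef hD hL
  have hQT : Qvvᵀ = Qvv := hQvv.1
  have heq : (fromBlocks (1 : Matrix (Fin n) (Fin n) ℝ) A (0 : Matrix (Fin m) (Fin n) ℝ) (1 : Matrix (Fin m) (Fin m) ℝ))ᴴ *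
      fromBlocks Qvv 0 0 Mhv * fromBlocks (1 : Matrix (Fin n) (Fin n) ℝ) A (0 : Matrix (Fin m) (Fin n) ℝ) (1 : Matrix (Fin m) (Fin m) ℝ) =
      fromBlocks Qvv (Qvv * A) (Aᵀ * Qvv) (Mhv + Aᵀ * Qvv * A) := by
    rw [fromBlocks_conjTranspose, fromBlocks_multiply, fromBlocks_multiply]
    congr 1 <;> simp [Matrix.mul_assoc, hQT, add_comm]
  rwa [heq] at key
end

section
/- Let M be an ℓ×ℓ real symmetric positive definite matrix partitioned into blocks M_vv (n×n), M_vh, M_hv = M_vhᵀ, M_hh, and let Q_vv be a fixed n×n real symmetric positive definite matrix. Among all ℓ×ℓ symmetric positive definite matrices Q whose upper-left n×n block equals Q_vv, the function Q ↦ Tr(M⁻¹Q) − log det Q is minimized by the completion with Q_vh = Q_vv (M_vv)⁻¹ M_vh and Q_hh = M_{h|v} + M_hv (M_vv)⁻¹ Q_vv (M_vv)⁻¹ M_vh, where M_{h|v} := M_hh − M_hv (M_vv)⁻¹ M_vh; that is, for every such Q, Tr(M⁻¹Q) − log det Q ≥ Tr(M⁻¹Q*) − log det Q*, where Q* denotes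 the stated completion. -/
open Matrix Real

section Aux

variable {ι : Type*} [Fintype ι] [DecidableEq ι]

lemma auxTraceFromBlocks {a b : Type*} [Fintype a] [Fintype b]
    (A : Matrix a a ℝ) (B : Matrix a b ℝ) (C : Matrix b a ℝ) (D : Matrix b b ℝ) :
    (fromBlocks A B C D).trace = A.trace + D.trace := by
  simp [Matrix.trace, Fintype.sum_sum_type, Matrix.diag]

lemma auxMulVecNeZero {L : Matrix ι ι ℝ} (hL : IsUnit L.det) {x : ι → ℝ} (hx : x ≠ 0) :
    L *ᵥ x ≠ 0 := by
  intro h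
  apply hx
  have h2 : L⁻¹ *ᵥ (L *ᵥ x) = x := by
    rw [mulVec_mulVec, nonsing_inv_mul _ hL, one_mulVec]
  rw [← h2, h, mulVec_zero]

lemma auxPosDefConj {L K : Matrix ι ι ℝ} (hK : K.PosDef) (hL : IsUnit L.det) :
    (Lᵀ * K * L).PosDef := by
  have hKh : Kᵀ = K := by
    simpa [Matrix.conjTranspose_eq_transpose_of_trivial, Matrix.IsSymm] using hK.isHermitian
  rw [posDef_iff_dotProduct_mulVec]
  constructor
  · show (Lᵀ * K * L)ᴴ = _
    simp [Matrix.conjTranspose_eq_transpose_of_trivial, transpose_mul, hKh, Matrix.mul_assoc]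
  · intro x hx
    have h1 : star x ⬝ᵥ (Lᵀ * K * L) *ᵥ x = star (L *ᵥ x) ⬝ᵥ K *ᵥ (L *ᵥ x) := by
      simp [star_trivial, ← mulVec_mulVec, dotProduct_mulVec, vecMul_transpose]
    rw [h1]
    exact hK.dotProduct_mulVec_pos (auxMulVecNeZero hL hx)

lemma auxPosDefBlockDiag {a b : Type*} [Fintype a] [Fintype b] [DecidableEq a] [DecidableEq b]
    {A : Matrix a a ℝ} {D : Matrix b b ℝ} (hA : A.PosDef) (hD : D.PosDef) :
    (fromBlocks A 0 0 D).PosDef := by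
  have hAh : Aᵀ = A := by
    simpa [Matrix.conjTranspose_eq_transpose_of_trivial, Matrix.IsSymm] using hA.isHermitian
  have hDh : Dᵀ = D := by
    simpa [Matrix.conjTranspose_eq_transpose_of_trivial, Matrix.IsSymm] using hD.isHermitian
  rw [posDef_iff_dotProduct_mulVec]
  constructor
  · show _ᴴ = _
    simp [Matrix.conjTranspose_eq_transpose_of_trivial, fromBlocks_transpose, hAh, hDh]
  · intro x hx
    have hxe : x = Sum.elim (x ∘ Sum.inl) (x ∘ Sum.inr) := (Sum.elim_comp_inl_inr x).symm
    have h1 : 0 ≤ (x ∘ Sum.inl) ⬝ᵥ A *ᵥ (x ∘ Sum.inl) := by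
      simpa [star_trivial] using hA.posSemidef.dotProduct_mulVec_nonneg (x ∘ Sum.inl)
    have h2 : 0 ≤ (x ∘ Sum.inr) ⬝ᵥ D *ᵥ (x ∘ Sum.inr) := by
      simpa [star_trivial] using hD.posSemidef.dotProduct_mulVec_nonneg (x ∘ Sum.inr)
    have hmain : star x ⬝ᵥ (fromBlocks A 0 0 D) *ᵥ x
        = (x ∘ Sum.inl) ⬝ᵥ A *ᵥ (x ∘ Sum.inl) + (x ∘ Sum.inr) ⬝ᵥ D *ᵥ (x ∘ Sum.inr) := by
      conv_lhs => rw [hxe]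
      simp only [star_trivial, fromBlocks_mulVec, zero_mulVec, add_zero, zero_add,
        mulVec_zero, sumElim_dotProduct_sumElim, Sum.elim_comp_inl, Sum.elim_comp_inr]
    rw [hmain]
    by_cases hx1 : x ∘ Sum.inl = 0
    · have hx2 : x ∘ Sum.inr ≠ 0 := by
        intro h
        apply hx
        rw [hxe, hx1, h]
        funext i; cases i <;> rfl
      have := hD.dotProduct_mulVec_pos hx2
      simp only [star_trivial] at this
      linarith
    · have := hA.dotProduct_mulVec_pos hx1
      simp only [star_trivial] at this
      linarith

lemma auxPosDefToBlocks₁₁ {a b : Type*} [Fintype a] [Fintype b]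
    {M : Matrix (a ⊕ b) (a ⊕ b) ℝ} (hM : M.PosDef) : M.toBlocks₁₁.PosDef := by
  have hMh : Mᵀ = M := by
    simpa [Matrix.conjTranspose_eq_transpose_of_trivial, Matrix.IsSymm] using hM.isHermitian
  rw [posDef_iff_dotProduct_mulVec]
  constructor
  · show _ᴴ = _
    ext i j
    have := congrFun (congrFun hMh (Sum.inl i)) (Sum.inl j)
    simpa [Matrix.toBlocks₁₁, Matrix.conjTranspose_apply, Matrix.transpose_apply] using this
  · intro x hx
    have hxe : (Sum.elim x (0 : b → ℝ)) ≠ 0 := by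
      intro h
      apply hx
      funext i
      exact congrFun h (Sum.inl i)
    have := hM.dotProduct_mulVec_pos hxe
    have hre : M = fromBlocks M.toBlocks₁₁ M.toBlocks₁₂ M.toBlocks₂₁ M.toBlocks₂₂ :=
      (fromBlocks_toBlocks M).symm
    rw [hre] at this
    simpa [star_trivial, fromBlocks_mulVec, sumElim_dotProduct_sumElim] using this

lemma auxSchurPD {a b : Type*} [Fintype a] [Fintype b] [DecidableEq a] [DecidableEq b]
    {A : Matrix a a ℝ} {B : Matrix a b ℝ} {D : Matrix b b ℝ}
    (hA : A.PosDef) (h : (fromBlocks A B Bᴴ D).PosDef) :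
    (D - Bᴴ * A⁻¹ * B).PosDef := by
  haveI := A.invertibleOfIsUnitDet (isUnit_iff_ne_zero.mpr hA.det_pos.ne')
  have hAt : Aᵀ = A := by
    simpa [Matrix.conjTranspose_eq_transpose_of_trivial, Matrix.IsSymm] using hA.isHermitian
  have hDt : Dᵀ = D := by
    have := congrArg Matrix.toBlocks₂₂ h.isHermitian
    simpa [Matrix.fromBlocks_conjTranspose, Matrix.fromBlocks_transpose, Matrix.toBlocks_fromBlocks₂₂] using this
  rw [posDef_iff_dotProduct_mulVec]
  constructor
  · show _ᴴ = _
    simp [Matrix.conjTranspose_eq_transpose_of_trivial, transpose_sub, transpose_mul,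
      hDt, transpose_nonsing_inv, hAt, Matrix.mul_assoc]
  · intro y hy
    have hne : (Sum.elim (-((A⁻¹ * B) *ᵥ y)) y) ≠ 0 := by
      intro hz
      apply hy
      funext i
      exact congrFun hz (Sum.inr i)
    have := h.dotProduct_mulVec_pos hne
    rw [dotProduct_mulVec, schur_complement_eq₁₁ B D _ _ hA.1, neg_add_cancel, dotProduct_zero,
      zero_add] at this
    rw [dotProduct_mulVec]
    exact this

lemma auxTraceEigen {T : Matrix ι ι ℝ} (hT : T.PosDef) :
    (Fintype.card ι : ℝ) + Real.log T.det ≤ T.trace := by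
  have hherm := hT.isHermitian
  have heig : ∀ i, 0 < hherm.eigenvalues i := hT.eigenvalues_pos
  have hdet : T.det = ∏ i, hherm.eigenvalues i := by
    simpa [RCLike.ofReal_real_eq_id] using hherm.det_eq_prod_eigenvalues
  have htrace : T.trace = ∑ i, hherm.eigenvalues i := by
    conv_lhs => rw [hherm.spectral_theorem, Unitary.conjStarAlgAut_apply]
    rw [Matrix.trace_mul_cycle,
      (Matrix.mem_unitaryGroup_iff').mp (hherm.eigenvectorUnitary).2, Matrix.one_mul]
    simp [Matrix.trace_diagonal, RCLike.ofReal_real_eq_id]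
  have hlog : Real.log T.det = ∑ i, Real.log (hherm.eigenvalues i) := by
    rw [hdet]
    exact Real.log_prod (fun i _ => (heig i).ne')
  rw [htrace, hlog]
  have hcard : (Fintype.card ι : ℝ) = ∑ _i : ι, (1 : ℝ) := by simp
  rw [hcard, ← Finset.sum_add_distrib]
  apply Finset.sum_le_sum
  intro i _
  have := Real.log_le_sub_one_of_pos (heig i)
  linarith

open scoped MatrixOrder in
lemma auxTraceLog {P Q : Matrix ι ι ℝ} (hP : P.PosDef) (hQ : Q.PosDef) :
    (Fintype.card ι : ℝ) + Real.log Q.det - Real.log P.det ≤ (P⁻¹ * Q).trace := by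
  have hPi : P⁻¹.PosDef := hP.inv
  have hRpsd : Matrix.PosSemidef (CFC.sqrt P⁻¹) := (CFC.sqrt_nonneg P⁻¹).posSemidef
  set R := CFC.sqrt P⁻¹ with hRdef
  have hRR : R * R = P⁻¹ := CFC.sqrt_mul_sqrt_self P⁻¹ hPi.posSemidef.nonneg
  have hRt : Rᵀ = R := by
    simpa [Matrix.conjTranspose_eq_transpose_of_trivial, Matrix.IsSymm] using hRpsd.1
  have hdetP : 0 < P.det := hP.det_pos
  have hdetPi : 0 < P⁻¹.det := hPi.det_pos
  have hdetR : R.det ≠ 0 := by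
    intro h
    have : P⁻¹.det = 0 := by rw [← hRR, det_mul, h, zero_mul]
    exact hdetPi.ne' this
  have hT : (Rᵀ * Q * R).PosDef := auxPosDefConj hQ (isUnit_iff_ne_zero.mpr hdetR)
  have htr : (P⁻¹ * Q).trace = (Rᵀ * Q * R).trace := by
    rw [hRt, ← hRR, Matrix.mul_assoc, Matrix.trace_mul_comm, Matrix.mul_assoc]
  have hdetPinv : P⁻¹.det = (P.det)⁻¹ := by
    rw [Matrix.det_nonsing_inv, Ring.inverse_eq_inv']
  have hdetT : (Rᵀ * Q * R).det = P⁻¹.det * Q.det := by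
    rw [det_mul, det_mul, hRt, ← hRR, det_mul]; ring
  have key := auxTraceEigen hT
  have hlog : Real.log ((Rᵀ * Q * R).det) = Real.log Q.det - Real.log P.det := by
    rw [hdetT, Real.log_mul hdetPi.ne' hQ.det_pos.ne', hdetPinv, Real.log_inv]
    ring
  rw [htr]
  rw [hlog] at key
  linarith

end Aux

theorem stmt6 {n m : ℕ}
    (M : Matrix (Fin n ⊕ Fin m) (Fin n ⊕ Fin m) ℝ) (hM : M.PosDef)
    (Qvv : Matrix (Fin n) (Fin n) ℝ) (hQvv : Qvv.PosDef)
    (Qstar : Matrix (Fin n ⊕ Fin m) (Fin n ⊕ Fin m) ℝ)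
    (hQstar : Qstar =
      Matrix.fromBlocks Qvv
        (Qvv * (M.toBlocks₁₁)⁻¹ * M.toBlocks₁₂)
        ((Qvv * (M.toBlocks₁₁)⁻¹ * M.toBlocks₁₂)ᵀ)
        ((M.toBlocks₂₂ - M.toBlocks₂₁ * (M.toBlocks₁₁)⁻¹ * M.toBlocks₁₂)
          + M.toBlocks₂₁ * (M.toBlocks₁₁)⁻¹ * Qvv * (M.toBlocks₁₁)⁻¹ * M.toBlocks₁₂)) :
    ∀ Q : Matrix (Fin n ⊕ Fin m) (Fin n ⊕ Fin m) ℝ,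
      Q.PosDef → Q.toBlocks₁₁ = Qvv →
      (M⁻¹ * Qstar).trace - Real.log Qstar.det
        ≤ (M⁻¹ * Q).trace - Real.log Q.det := by
  intro Q hQ hQ11
  -- Abbreviations
  set A := M.toBlocks₁₁ with hAdef
  set B := M.toBlocks₁₂ with hBdef
  set C := M.toBlocks₂₁ with hCdef
  set Dm := M.toBlocks₂₂ with hDdef
  have hMre : M = fromBlocks A B C Dm := (fromBlocks_toBlocks M).symm
  have hMh : Mᵀ = M := by
    simpa [Matrix.conjTranspose_eq_transpose_of_trivial, Matrix.IsSymm] using hM.isHermitian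
  have hAt : Aᵀ = A := by
    ext i j
    have := congrFun (congrFun hMh (Sum.inl i)) (Sum.inl j)
    simpa [hAdef, Matrix.toBlocks₁₁, Matrix.transpose_apply] using this
  have hDt : Dmᵀ = Dm := by
    ext i j
    have := congrFun (congrFun hMh (Sum.inr i)) (Sum.inr j)
    simpa [hDdef, Matrix.toBlocks₂₂, Matrix.transpose_apply] using this
  have hCB : C = Bᵀ := by
    ext i j
    have := congrFun (congrFun hMh (Sum.inr i)) (Sum.inl j)
    simpa [hCdef, hBdef, Matrix.toBlocks₂₁, Matrix.toBlocks₁₂, Matrix.transpose_apply] using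
      this.symm
  have hQvvt : Qvvᵀ = Qvv := by
    simpa [Matrix.conjTranspose_eq_transpose_of_trivial, Matrix.IsSymm] using hQvv.isHermitian
  have hApd : A.PosDef := auxPosDefToBlocks₁₁ hM
  have hAdet : IsUnit A.det := isUnit_iff_ne_zero.mpr hApd.det_pos.ne'
  -- Schur complement
  set H := Dm - C * A⁻¹ * B with hHdef
  have hHpd : H.PosDef := by
    have hfb : (fromBlocks A B Bᴴ Dm).PosDef := by
      have : Bᴴ = C := by
        rw [hCB]; simp [Matrix.conjTranspose_eq_transpose_of_trivial]
      rw [this, ← hMre]; exact hM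
    have := auxSchurPD hApd hfb
    have hBH : Bᴴ = Bᵀ := by simp [Matrix.conjTranspose_eq_transpose_of_trivial]
    rw [hBH] at this
    rw [hHdef, hCB]
    exact this
  have hHdet : IsUnit H.det := isUnit_iff_ne_zero.mpr hHpd.det_pos.ne'
  -- factorizations
  set J := A⁻¹ * B with hJdef
  have hAJ : A * J = B := by
    rw [hJdef, ← Matrix.mul_assoc, mul_nonsing_inv _ hAdet, Matrix.one_mul]
  have hJt : Jᵀ = Bᵀ * A⁻¹ := by
    rw [hJdef, transpose_mul, transpose_nonsing_inv, hAt]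
  set L : Matrix (Fin n ⊕ Fin m) (Fin n ⊕ Fin m) ℝ := fromBlocks 1 J 0 1 with hLdef
  set Li : Matrix (Fin n ⊕ Fin m) (Fin n ⊕ Fin m) ℝ := fromBlocks 1 (-J) 0 1 with hLidef
  have hLLi : L * Li = 1 := by
    rw [hLdef, hLidef, fromBlocks_multiply]
    simp [fromBlocks_one]
  have hLinv : L⁻¹ = Li := inv_eq_right_inv hLLi
  have hLdet : IsUnit L.det := by
    rw [hLdef, det_fromBlocks_zero₂₁]
    simp
  have hMfact : M = Lᵀ * fromBlocks A 0 0 H * L := by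
    rw [hMre, hLdef, fromBlocks_transpose, fromBlocks_multiply, fromBlocks_multiply]
    rw [hHdef, hCB, Matrix.fromBlocks_inj]
    refine ⟨by simp, by simp [hAJ], by simp [hJt, Matrix.mul_assoc, nonsing_inv_mul _ hAdet], ?_⟩
    have hJAJ : Jᵀ * A * J = Bᵀ * A⁻¹ * B := by
      rw [Matrix.mul_assoc, hAJ, hJt]
    simp only [Matrix.transpose_one, Matrix.transpose_zero, Matrix.one_mul, Matrix.mul_one,
      Matrix.zero_mul, Matrix.mul_zero, add_zero, zero_add]
    rw [hJAJ]
    abel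
  have hQfact : Qstar = Lᵀ * fromBlocks Qvv 0 0 H * L := by
    rw [hQstar, hLdef, fromBlocks_transpose, fromBlocks_multiply, fromBlocks_multiply]
    rw [hHdef, hCB, Matrix.fromBlocks_inj]
    refine ⟨by simp, by simp [hJdef, Matrix.mul_assoc],
      by simp [hJt, hJdef, transpose_mul, transpose_nonsing_inv, hAt, hQvvt, Matrix.mul_assoc], ?_⟩
    have hJQJ : Jᵀ * Qvv * J = Bᵀ * A⁻¹ * Qvv * A⁻¹ * B := by
      rw [hJt, hJdef, ← Matrix.mul_assoc]
    simp only [Matrix.transpose_one, Matrix.transpose_zero, Matrix.one_mul, Matrix.mul_one,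
      Matrix.zero_mul, Matrix.mul_zero, add_zero, zero_add]
    rw [hJQJ]
    abel
  have hKpd : (fromBlocks A 0 0 H).PosDef := auxPosDefBlockDiag hApd hHpd
  have hK'pd : (fromBlocks Qvv 0 0 H).PosDef := auxPosDefBlockDiag hQvv hHpd
  have hQstarPD : Qstar.PosDef := by
    rw [hQfact]; exact auxPosDefConj hK'pd hLdet
  have hQvvdet : IsUnit Qvv.det := isUnit_iff_ne_zero.mpr hQvv.det_pos.ne'
  have hKinv : (fromBlocks A 0 0 H)⁻¹ = fromBlocks A⁻¹ 0 0 H⁻¹ := by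
    apply inv_eq_right_inv
    rw [fromBlocks_multiply]
    simp [mul_nonsing_inv _ hAdet, mul_nonsing_inv _ hHdet, fromBlocks_one]
  have hK'inv : (fromBlocks Qvv 0 0 H)⁻¹ = fromBlocks Qvv⁻¹ 0 0 H⁻¹ := by
    apply inv_eq_right_inv
    rw [fromBlocks_multiply]
    simp [mul_nonsing_inv _ hQvvdet, mul_nonsing_inv _ hHdet, fromBlocks_one]
  have hMinv : M⁻¹ = Li * fromBlocks A⁻¹ 0 0 H⁻¹ * Liᵀ := by
    rw [hMfact, Matrix.mul_inv_rev, Matrix.mul_inv_rev, hKinv, hLinv,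
      ← transpose_nonsing_inv, hLinv, Matrix.mul_assoc]
  have hQinv : Qstar⁻¹ = Li * fromBlocks Qvv⁻¹ 0 0 H⁻¹ * Liᵀ := by
    rw [hQfact, Matrix.mul_inv_rev, Matrix.mul_inv_rev, hK'inv, hLinv,
      ← transpose_nonsing_inv, hLinv, Matrix.mul_assoc]
  have hE : M⁻¹ - Qstar⁻¹ = fromBlocks (A⁻¹ - Qvv⁻¹) 0 0 0 := by
    rw [hMinv, hQinv, ← Matrix.sub_mul, ← Matrix.mul_sub]
    have hsub : fromBlocks A⁻¹ 0 0 H⁻¹ - fromBlocks Qvv⁻¹ 0 0 H⁻¹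
        = fromBlocks (A⁻¹ - Qvv⁻¹) 0 0 0 := by
      simp [sub_eq_add_neg, fromBlocks_neg, fromBlocks_add]
    rw [hsub, hLidef, fromBlocks_transpose, fromBlocks_multiply, fromBlocks_multiply]
    simp
  have htrE : ∀ X : Matrix (Fin n ⊕ Fin m) (Fin n ⊕ Fin m) ℝ, X.toBlocks₁₁ = Qvv →
      ((M⁻¹ - Qstar⁻¹) * X).trace = ((A⁻¹ - Qvv⁻¹) * Qvv).trace := by
    intro X hX
    rw [hE, ← fromBlocks_toBlocks X, hX, fromBlocks_multiply, auxTraceFromBlocks]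
    simp
  have hQstar11 : Qstar.toBlocks₁₁ = Qvv := by
    rw [hQstar]; exact toBlocks_fromBlocks₁₁ _ _ _ _
  have htrQ := htrE Q hQ11
  have htrQstar := htrE Qstar hQstar11
  have hQstardet : IsUnit Qstar.det := isUnit_iff_ne_zero.mpr hQstarPD.det_pos.ne'
  have hsplit : ∀ X : Matrix (Fin n ⊕ Fin m) (Fin n ⊕ Fin m) ℝ,
      (M⁻¹ * X).trace = (Qstar⁻¹ * X).trace + ((M⁻¹ - Qstar⁻¹) * X).trace := by
    intro X
    rw [← Matrix.trace_add, ← Matrix.add_mul, add_sub_cancel]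
  have htrone : (Qstar⁻¹ * Qstar).trace = (Fintype.card (Fin n ⊕ Fin m) : ℝ) := by
    rw [nonsing_inv_mul _ hQstardet, Matrix.trace_one]
  have key := auxTraceLog hQstarPD hQ
  have e1 := hsplit Q
  have e2 := hsplit Qstar
  rw [htrone] at e2
  rw [htrQ] at e1
  rw [htrQstar] at e2
  linarith
end

section
/- Let λ > 0 and, for k = 1,…,K, let Q⁽ᵏ⁾ and Q̃⁽ᵏ⁾ be ℓ×ℓ real symmetric positive definite matrices and M, M̃ ℓ×ℓ real symmetric positive definite matrices. Define J(Q⁽¹⁾,…,Q⁽ᴷ⁾, M) := λ·KL(I, M) + Σ_{k=1}^{K} KL(Q⁽ᵏ⁾, M). Suppose (i) each Q̃⁽ᵏ⁾ has the same upper-left visible block as Q⁽ᵏ⁾ and satisfies KL(Q̃⁽ᵏ⁾, M) ≤ KL(Q⁽ᵏ⁾, M) (E-step does not increase each divergence), and (ii) M̃ = (1/(λ+K))·(Σ_{k=1}^{K} Q̃⁽ᵏ⁾ + λ·I) (M-step). Then J(Q̃⁽¹⁾,…,Q̃⁽ᴷ⁾, M̃) ≤ J(Q⁽¹⁾,…,Q⁽ᴷ⁾,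 M); i.e., one full MKMC iteration does not increase the objective. -/
open Matrix Real

/-- The matrix Kullback–Leibler divergence
`KL(Q, M) := (1/2)[Tr(M⁻¹Q) + log det M − log det Q − ℓ]`,
where `ℓ` is the size of the matrices. -/
noncomputable def matKL {ι : Type*} [Fintype ι] [DecidableEq ι]
    (Q M : Matrix ι ι ℝ) : ℝ :=
  (1 / 2) * ((M⁻¹ * Q).trace + Real.log M.det - Real.log Q.det - Fintype.card ι)

lemma trace_eq_sum_eigs {ι : Type*} [Fintype ι] [DecidableEq ι] {S : Matrix ι ι ℝ}
    (hS : S.IsHermitian) : S.trace = ∑ i, hS.eigenvalues i := by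
  simpa using hS.trace_eq_sum_eigenvalues

lemma posDef_conj {ι : Type*} [Fintype ι] [DecidableEq ι] {Q B : Matrix ι ι ℝ}
    (hQ : Q.PosDef) (hB : B.IsHermitian) (hBu : IsUnit B) : (B * Q * B).PosDef := by
  have := hQ.conjTranspose_mul_mul_same (B := B) (Matrix.mulVec_injective_iff_isUnit.mpr hBu)
  rwa [hB.eq] at this

open scoped MatrixOrder in
lemma matKL_nonneg {ι : Type*} [Fintype ι] [DecidableEq ι] {Q M : Matrix ι ι ℝ}
    (hQ : Q.PosDef) (hM : M.PosDef) : 0 ≤ matKL Q M := by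
  have hMi : M⁻¹.PosDef := hM.inv
  set B := CFC.sqrt M⁻¹ with hBdef
  have hB : B.PosSemidef := (CFC.sqrt_nonneg M⁻¹).posSemidef
  have hBB : B * B = M⁻¹ := CFC.sqrt_mul_sqrt_self M⁻¹ hMi.posSemidef.nonneg
  have hBu : IsUnit B := by
    rw [Matrix.isUnit_iff_isUnit_det]
    have h2 : B.det * B.det = M⁻¹.det := by rw [← det_mul, hBB]
    have hd : B.det ≠ 0 := by
      intro h
      rw [h, mul_zero] at h2
      exact hMi.det_pos.ne' h2.symm
    exact hd.isUnit
  have hS : (B * Q * B).PosDef := posDef_conj hQ hB.1 hBu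
  have htr : (M⁻¹ * Q).trace = (B * Q * B).trace := by
    rw [← hBB]; exact (trace_mul_cycle B Q B).symm
  have hdet : (B * Q * B).det = M⁻¹.det * Q.det := by
    rw [det_mul, det_mul, mul_right_comm, ← det_mul, hBB]
  have hMinv : M⁻¹.det = (M.det)⁻¹ := by
    rw [det_nonsing_inv, Ring.inverse_eq_inv']
  have hlogdet : Real.log (B * Q * B).det = Real.log Q.det - Real.log M.det := by
    rw [hdet, Real.log_mul (by simpa using hMi.det_pos.ne') hQ.det_pos.ne', hMinv, Real.log_inv]
    ring
  have key : (Fintype.card ι : ℝ) ≤ (B * Q * B).trace - Real.log (B * Q * B).det := by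
    have hev := hS.eigenvalues_pos
    have hprod : (B * Q * B).det = ∏ i, hS.1.eigenvalues i := by
      rw [hS.1.det_eq_prod_eigenvalues]; norm_num
    rw [trace_eq_sum_eigs hS.1, hprod,
      Real.log_prod (fun i _ => (hev i).ne'), ← Finset.sum_sub_distrib]
    have hcard : (Fintype.card ι : ℝ) = ∑ _i : ι, (1 : ℝ) := by simp
    rw [hcard]
    exact Finset.sum_le_sum fun i _ => by
      have := Real.log_le_sub_one_of_pos (hev i)
      linarith
  rw [matKL, htr]
  linarith

lemma sum_matKL {ι κ : Type*} [Fintype ι] [DecidableEq ι] [Fintype κ]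
    (Qs : κ → Matrix ι ι ℝ) (M' : Matrix ι ι ℝ) :
    ∑ k, matKL (Qs k) M' = (1/2) * ((∑ k, (M'⁻¹ * Qs k).trace)
      + (Fintype.card κ) * Real.log M'.det - (∑ k, Real.log (Qs k).det)
      - (Fintype.card κ) * (Fintype.card ι)) := by
  simp only [matKL]
  rw [← Finset.mul_sum]
  congr 1
  rw [Finset.sum_sub_distrib, Finset.sum_sub_distrib, Finset.sum_add_distrib]
  simp [Finset.card_univ, mul_comm]

theorem stmt10 {n m K : ℕ} (lam : ℝ) (hlam : 0 < lam)
    (Q Qt : Fin K → Matrix (Fin n ⊕ Fin m) (Fin n ⊕ Fin m) ℝ)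
    (M Mt : Matrix (Fin n ⊕ Fin m) (Fin n ⊕ Fin m) ℝ)
    (hQ : ∀ k, (Q k).PosDef) (hQt : ∀ k, (Qt k).PosDef)
    (hM : M.PosDef) (hMt : Mt.PosDef)
    (hblocks : ∀ k, (Qt k).toBlocks₁₁ = (Q k).toBlocks₁₁)
    (hEstep : ∀ k, matKL (Qt k) M ≤ matKL (Q k) M)
    (hMstep : Mt = (1 / (lam + K)) •
      (∑ k, Qt k + lam • (1 : Matrix (Fin n ⊕ Fin m) (Fin n ⊕ Fin m) ℝ))) :
    lam * matKL (1 : Matrix (Fin n ⊕ Fin m) (Fin n ⊕ Fin m) ℝ) Mt + ∑ k, matKL (Qt k) Mt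
      ≤ lam * matKL (1 : Matrix (Fin n ⊕ Fin m) (Fin n ⊕ Fin m) ℝ) M + ∑ k, matKL (Q k) M := by
  have hc : (lam + (K : ℝ)) ≠ 0 := by positivity
  have hA : (lam + (K : ℝ)) • Mt = ∑ k, Qt k + lam • 1 := by
    rw [hMstep, smul_smul]
    rw [show (lam + (K:ℝ)) * (1 / (lam + K)) = 1 by field_simp, one_smul]
  have hMtinv : Mt⁻¹ * Mt = 1 := nonsing_inv_mul _ hMt.det_pos.ne'.isUnit
  have htr : ∀ X : Matrix (Fin n ⊕ Fin m) (Fin n ⊕ Fin m) ℝ,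
      (lam + (K : ℝ)) * (X * Mt).trace
        = ∑ k, (X * Qt k).trace + lam * (X * 1).trace := by
    intro X
    have h := congrArg Matrix.trace (congrArg (fun Y => X * Y) hA)
    simpa only [Matrix.mul_add, Matrix.mul_sum, Matrix.mul_smul, trace_add, trace_sum,
      trace_smul, smul_eq_mul] using h
  have h1 := htr M⁻¹
  have h2 := htr Mt⁻¹
  rw [hMtinv, trace_one] at h2
  rw [Matrix.mul_one] at h1 h2
  have hid : lam * matKL 1 Mt + ∑ k, matKL (Qt k) Mt + (lam + (K : ℝ)) * matKL Mt M
      = lam * matKL 1 M + ∑ k, matKL (Qt k) M := by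
    rw [sum_matKL, sum_matKL]
    simp only [matKL, det_one, Real.log_one, Matrix.mul_one, Fintype.card_fin]
    push_cast
    linear_combination (1/2) * h1 - (1/2) * h2
  have hnn : 0 ≤ matKL Mt M := matKL_nonneg hMt hM
  have hcpos : 0 < lam + (K : ℝ) := by positivity
  have hle : lam * matKL 1 Mt + ∑ k, matKL (Qt k) Mt
      ≤ lam * matKL 1 M + ∑ k, matKL (Qt k) M := by
    nlinarith [hid, mul_nonneg hcpos.le hnn]
  calc lam * matKL 1 Mt + ∑ k, matKL (Qt k) Mt
      ≤ lam * matKL 1 M + ∑ k, matKL (Qt k) M := hle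
    _ ≤ lam * matKL 1 M + ∑ k, matKL (Q k) M :=
        add_le_add_right (Finset.sum_le_sum fun k _ => hEstep k) _
end
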